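/- For every real n > 2, there exists a number b̄ ∈ (0,1) such that h_n(b) > 0 for all b with b̄ < b < 1; that is, h_n is strictly positive in a left neighbourhood of 1. -/

import Mathlib

/-- `h_n(b) = n(1−b)(1−b^(n−2)) + (n−2)(1 + b^(n−2) − 2b^(n−1))·ln b`. -/
noncomputable def pwH (n b : ℝ) : ℝ :=
  n * (1 - b) * (1 - b ^ (n - 2)) +
    (n - 2) * (1 + b ^ (n - 2) - 2 * b ^ (n - 1)) * Real.log b

/-- Auxiliary exponential-polynomial form. -/
noncomputable def pwAux (a b c0 c1 c2 c3 c4 c5 c6 t : ℝ) : ℝ :=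
  c0 + c1 * Real.exp t + c2 * Real.exp (a * t) + c3 * Real.exp (b * t) + c4 * t +
    c5 * (t * Real.exp (a * t)) + c6 * (t * Real.exp (b * t))

lemma pwAux_hasDerivAt (a b c0 c1 c2 c3 c4 c5 c6 t : ℝ) :
    HasDerivAt (pwAux a b c0 c1 c2 c3 c4 c5 c6)
      (pwAux a b c4 c1 (c2 * a + c5) (c3 * b + c6) 0 (c5 * a) (c6 * b) t) t := by
  have hexp : HasDerivAt (fun t : ℝ => Real.exp t) (Real.exp t) t := Real.hasDerivAt_exp t
  have ha : HasDerivAt (fun t : ℝ => Real.exp (a * t)) (a * Real.exp (a * t)) t := by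
    simpa [mul_comm] using ((hasDerivAt_id t).const_mul a).exp
  have hb : HasDerivAt (fun t : ℝ => Real.exp (b * t)) (b * Real.exp (b * t)) t := by
    simpa [mul_comm] using ((hasDerivAt_id t).const_mul b).exp
  have hid : HasDerivAt (fun t : ℝ => t) 1 t := hasDerivAt_id t
  have h := ((((((hasDerivAt_const t c0).add (hexp.const_mul c1)).add
      (ha.const_mul c2)).add (hb.const_mul c3)).add (hid.const_mul c4)).add
      ((hid.mul ha).const_mul c5)).add ((hid.mul hb).const_mul c6)
  refine h.congr_deriv ?_
  unfold pwAux; ring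

lemma pwAux_continuous (a b c0 c1 c2 c3 c4 c5 c6 : ℝ) :
    Continuous (pwAux a b c0 c1 c2 c3 c4 c5 c6) := by
  unfold pwAux; fun_prop

lemma pwAux_zero (a b c0 c1 c2 c3 c4 c5 c6 : ℝ) :
    pwAux a b c0 c1 c2 c3 c4 c5 c6 0 = c0 + c1 + c2 + c3 := by
  simp [pwAux]

/-- `G n t = pwH n (exp t)`. -/
noncomputable def pwG (n : ℝ) : ℝ → ℝ :=
  pwAux (n-2) (n-1) n (-n) (-n) n (n-2) (n-2) (-(2*(n-2)))

noncomputable def pwG1 (n : ℝ) : ℝ → ℝ :=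
  pwAux (n-2) (n-1) (n-2) (-n) ((-n) * (n-2) + (n-2)) (n * (n-1) + (-(2*(n-2)))) 0
    ((n-2) * (n-2)) ((-(2*(n-2))) * (n-1))

noncomputable def pwG2 (n : ℝ) : ℝ → ℝ :=
  pwAux (n-2) (n-1) 0 (-n)
    (((-n) * (n-2) + (n-2)) * (n-2) + (n-2) * (n-2))
    ((n * (n-1) + (-(2*(n-2)))) * (n-1) + (-(2*(n-2))) * (n-1)) 0
    ((n-2) * (n-2) * (n-2)) ((-(2*(n-2))) * (n-1) * (n-1))

noncomputable def pwG3 (n : ℝ) : ℝ → ℝ :=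
  pwAux (n-2) (n-1) 0 (-n)
    ((((-n) * (n-2) + (n-2)) * (n-2) + (n-2) * (n-2)) * (n-2) + (n-2) * (n-2) * (n-2))
    (((n * (n-1) + (-(2*(n-2)))) * (n-1) + (-(2*(n-2))) * (n-1)) * (n-1) + (-(2*(n-2))) * (n-1) * (n-1))
    0 ((n-2) * (n-2) * (n-2) * (n-2)) ((-(2*(n-2))) * (n-1) * (n-1) * (n-1))

lemma pwG_hasDerivAt (n t : ℝ) : HasDerivAt (pwG n) (pwG1 n t) t := by
  simpa [pwG, pwG1] using pwAux_hasDerivAt (n-2) (n-1) n (-n) (-n) n (n-2) (n-2) (-(2*(n-2))) t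

lemma pwG1_hasDerivAt (n t : ℝ) : HasDerivAt (pwG1 n) (pwG2 n t) t := by
  simpa [pwG1, pwG2, mul_zero, zero_mul] using pwAux_hasDerivAt (n-2) (n-1) (n-2) (-n)
    ((-n) * (n-2) + (n-2)) (n * (n-1) + (-(2*(n-2)))) 0 ((n-2) * (n-2)) ((-(2*(n-2))) * (n-1)) t

lemma pwG2_hasDerivAt (n t : ℝ) : HasDerivAt (pwG2 n) (pwG3 n t) t := by
  simpa [pwG2, pwG3, mul_zero, zero_mul] using pwAux_hasDerivAt (n-2) (n-1) 0 (-n)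
    (((-n) * (n-2) + (n-2)) * (n-2) + (n-2) * (n-2))
    ((n * (n-1) + (-(2*(n-2)))) * (n-1) + (-(2*(n-2))) * (n-1)) 0
    ((n-2) * (n-2) * (n-2)) ((-(2*(n-2))) * (n-1) * (n-1)) t

lemma pwG_zero (n : ℝ) : pwG n 0 = 0 := by
  rw [pwG, pwAux_zero]; ring

lemma pwG1_zero (n : ℝ) : pwG1 n 0 = 0 := by
  rw [pwG1, pwAux_zero]; ring

lemma pwG2_zero (n : ℝ) : pwG2 n 0 = 0 := by
  rw [pwG2, pwAux_zero]; ring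

lemma pwG3_zero (n : ℝ) : pwG3 n 0 = -3 * (n-2)^2 := by
  rw [pwG3, pwAux_zero]; ring

lemma pwH_exp (n t : ℝ) : pwH n (Real.exp t) = pwG n t := by
  unfold pwH pwG pwAux
  have hsplit : Real.exp ((n-1) * t) = Real.exp t * Real.exp ((n-2) * t) := by
    rw [← Real.exp_add]; congr 1; ring
  rw [Real.rpow_def_of_pos (Real.exp_pos t), Real.rpow_def_of_pos (Real.exp_pos t),
    Real.log_exp, mul_comm t (n-2), mul_comm t (n-1), hsplit]
  ring

/-- For every real `n > 2` there is `b̄ ∈ (0,1)` with `h_n(b) > 0` for all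
`b̄ < b < 1`: `h_n` is strictly positive in a left neighbourhood of `1`. -/
theorem pairwise_h_pos_near_one (n : ℝ) (hn : 2 < n) :
    ∃ bbar : ℝ, 0 < bbar ∧ bbar < 1 ∧
      ∀ b : ℝ, bbar < b → b < 1 → 0 < pwH n b := by
  have hm : (0:ℝ) < n - 2 := by linarith
  have hG3neg : pwG3 n 0 < 0 := by rw [pwG3_zero]; nlinarith
  have hev : ∀ᶠ t in nhds (0:ℝ), pwG3 n t < 0 :=
    Filter.Tendsto.eventually_lt_const hG3neg
      ((pwAux_continuous _ _ _ _ _ _ _ _ _).continuousAt (x := 0))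
  obtain ⟨ε, hε, hball⟩ := Metric.eventually_nhds_iff.mp hev
  have hneg3 : ∀ t ∈ Set.Ioo (-ε) 0, pwG3 n t < 0 := by
    intro t ht
    exact hball (by rw [Real.dist_eq, sub_zero, abs_lt]; exact ⟨ht.1, lt_of_lt_of_le ht.2 hε.le⟩)
  have hmem0 : (0:ℝ) ∈ Set.Icc (-ε) 0 := ⟨by linarith, le_refl 0⟩
  -- G2 is strictly antitone, hence positive on (-ε, 0)
  have hG2anti : StrictAntiOn (pwG2 n) (Set.Icc (-ε) 0) := by
    apply strictAntiOn_of_deriv_neg (convex_Icc _ _) (pwAux_continuous _ _ _ _ _ _ _ _ _).continuousOn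
    intro x hx
    rw [interior_Icc] at hx
    show deriv (pwG2 n) x < 0
    rw [(pwG2_hasDerivAt n x).deriv]
    exact hneg3 x hx
  have hG2pos : ∀ t ∈ Set.Ioo (-ε) 0, 0 < pwG2 n t := by
    intro t ht
    have := hG2anti ⟨ht.1.le, ht.2.le⟩ hmem0 ht.2
    rwa [pwG2_zero] at this
  -- G1 is strictly monotone, hence negative on (-ε, 0)
  have hG1mono : StrictMonoOn (pwG1 n) (Set.Icc (-ε) 0) := by
    apply strictMonoOn_of_deriv_pos (convex_Icc _ _) (pwAux_continuous _ _ _ _ _ _ _ _ _).continuousOn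
    intro x hx
    rw [interior_Icc] at hx
    show 0 < deriv (pwG1 n) x
    rw [(pwG1_hasDerivAt n x).deriv]
    exact hG2pos x hx
  have hG1neg : ∀ t ∈ Set.Ioo (-ε) 0, pwG1 n t < 0 := by
    intro t ht
    have := hG1mono ⟨ht.1.le, ht.2.le⟩ hmem0 ht.2
    rwa [pwG1_zero] at this
  -- G is strictly antitone, hence positive on (-ε, 0)
  have hGanti : StrictAntiOn (pwG n) (Set.Icc (-ε) 0) := by
    apply strictAntiOn_of_deriv_neg (convex_Icc _ _) (pwAux_continuous _ _ _ _ _ _ _ _ _).continuousOn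
    intro x hx
    rw [interior_Icc] at hx
    show deriv (pwG n) x < 0
    rw [(pwG_hasDerivAt n x).deriv]
    exact hG1neg x hx
  have hGpos : ∀ t ∈ Set.Ioo (-ε) 0, 0 < pwG n t := by
    intro t ht
    have := hGanti ⟨ht.1.le, ht.2.le⟩ hmem0 ht.2
    rwa [pwG_zero] at this
  refine ⟨Real.exp (-ε), Real.exp_pos _, ?_, ?_⟩
  · exact Real.exp_lt_one_iff.mpr (by linarith)
  · intro b hb1 hb2
    have hb0 : 0 < b := lt_trans (Real.exp_pos _) hb1
    have ht1 : Real.log b < 0 := Real.log_neg hb0 hb2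
    have ht2 : -ε < Real.log b := (Real.lt_log_iff_exp_lt hb0).mpr hb1
    have hpos := hGpos (Real.log b) ⟨ht2, ht1⟩
    rwa [← pwH_exp, Real.exp_log hb0] at hpos
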